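/- Let L be an orthomodular lattice, m a state on L, and let v, u, a₁, a₂, a₃, b₁, b₂, b₃, c₁, c₂, c₃, d₁, d₂, d₃ ∈ L satisfy: v ⊥ aᵢ for i = 1, 2, 3; dᵢ ⊥ cᵢ for i = 1, 2; for each i = 1, 2, 3 the elements aᵢ, bᵢ, cᵢ are mutually orthogonal and aᵢ ⊔ bᵢ ⊔ cᵢ = 1; the elements d₁, d₂, d₃ are mutually orthogonal and d₁ ⊔ d₂ ⊔ d₃ = 1; the elements b₁, b₂, b₃ are mutually orthogonal; and the elements c₃, u, d₃ are mutually orthogonal. Then m(v) = 1 implies m(u') = 1. -/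

import Mathlib

/-- An ortholattice: a bounded lattice with an orthocomplementation. -/
class Ortholattice (α : Type*) extends Lattice α, BoundedOrder α, Compl α where
  compl_compl : ∀ a : α, aᶜᶜ = a
  compl_le_compl : ∀ a b : α, a ≤ b → bᶜ ≤ aᶜ
  inf_compl_self : ∀ a : α, a ⊓ aᶜ = ⊥
  sup_compl_self : ∀ a : α, a ⊔ aᶜ = ⊤

/-- A state (probability measure) on an ortholattice. -/
def IsState {α : Type*} [Ortholattice α] (m : α → ℝ) : Prop :=
  (∀ a : α, 0 ≤ m a ∧ m a ≤ 1) ∧ m ⊤ = 1 ∧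
    ∀ a b : α, a ≤ bᶜ → m (a ⊔ b) = m a + m b

/-- In an orthomodular lattice with elements arranged as in the OML MG1
(with the listed orthogonality and disjunction conditions), any state `m` with
`m(v) = 1` satisfies `m(u') = 1`. -/
theorem stmt_17 {α : Type*} [Ortholattice α]
    (hOML : ∀ a b : α, a ≤ b → a ⊔ (aᶜ ⊓ b) = b)
    (m : α → ℝ) (hm : IsState m)
    (v u a₁ a₂ a₃ b₁ b₂ b₃ c₁ c₂ c₃ d₁ d₂ d₃ : α)
    -- `v ⊥ aᵢ` for `i = 1, 2, 3`
    (hva₁ : v ≤ a₁ᶜ) (hva₂ : v ≤ a₂ᶜ) (hva₃ : v ≤ a₃ᶜ)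
    -- `dᵢ ⊥ cᵢ` for `i = 1, 2`
    (hdc₁ : d₁ ≤ c₁ᶜ) (hdc₂ : d₂ ≤ c₂ᶜ)
    -- `{a₁, b₁, c₁}` mutually orthogonal with join `1`
    (hab₁ : a₁ ≤ b₁ᶜ) (hac₁ : a₁ ≤ c₁ᶜ) (hbc₁ : b₁ ≤ c₁ᶜ)
    (habc₁ : a₁ ⊔ b₁ ⊔ c₁ = ⊤)
    -- `{a₂, b₂, c₂}` mutually orthogonal with join `1`
    (hab₂ : a₂ ≤ b₂ᶜ) (hac₂ : a₂ ≤ c₂ᶜ) (hbc₂ : b₂ ≤ c₂ᶜ)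
    (habc₂ : a₂ ⊔ b₂ ⊔ c₂ = ⊤)
    -- `{a₃, b₃, c₃}` mutually orthogonal with join `1`
    (hab₃ : a₃ ≤ b₃ᶜ) (hac₃ : a₃ ≤ c₃ᶜ) (hbc₃ : b₃ ≤ c₃ᶜ)
    (habc₃ : a₃ ⊔ b₃ ⊔ c₃ = ⊤)
    -- `{d₁, d₂, d₃}` mutually orthogonal with join `1`
    (hd₁₂ : d₁ ≤ d₂ᶜ) (hd₁₃ : d₁ ≤ d₃ᶜ) (hd₂₃ : d₂ ≤ d₃ᶜ)
    (hddd : d₁ ⊔ d₂ ⊔ d₃ = ⊤)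
    -- `{b₁, b₂, b₃}` mutually orthogonal
    (hb₁₂ : b₁ ≤ b₂ᶜ) (hb₁₃ : b₁ ≤ b₃ᶜ) (hb₂₃ : b₂ ≤ b₃ᶜ)
    -- `{c₃, u, d₃}` mutually orthogonal
    (hcu : c₃ ≤ uᶜ) (hcd : c₃ ≤ d₃ᶜ) (hud : u ≤ d₃ᶜ) :
    m v = 1 → m uᶜ = 1 := by
  intro hv
  obtain ⟨hbd, htop, hadd⟩ := hm
  have sum3 : ∀ a b c : α, a ≤ bᶜ → a ≤ cᶜ → b ≤ cᶜ →
      m (a ⊔ b ⊔ c) = m a + m b + m c := by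
    intro a b c h1 h2 h3
    rw [hadd _ _ (sup_le h2 h3), hadd _ _ h1]
  have ha : ∀ a : α, v ≤ aᶜ → m a = 0 := by
    intro a h
    have h1 := hadd v a h
    rw [hv] at h1
    have h2 := (hbd (v ⊔ a)).2
    have h3 := (hbd a).1
    linarith
  have ha1 := ha a₁ hva₁
  have ha2 := ha a₂ hva₂
  have ha3 := ha a₃ hva₃
  have e1 := sum3 a₁ b₁ c₁ hab₁ hac₁ hbc₁
  have e2 := sum3 a₂ b₂ c₂ hab₂ hac₂ hbc₂
  have e3 := sum3 a₃ b₃ c₃ hab₃ hac₃ hbc₃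
  have ed := sum3 d₁ d₂ d₃ hd₁₂ hd₁₃ hd₂₃
  rw [habc₁, htop] at e1
  rw [habc₂, htop] at e2
  rw [habc₃, htop] at e3
  rw [hddd, htop] at ed
  have eb := sum3 b₁ b₂ b₃ hb₁₂ hb₁₃ hb₂₃
  have hb1 := (hbd (b₁ ⊔ b₂ ⊔ b₃)).2
  have hdc1 := hadd d₁ c₁ hdc₁
  have hdc1' := (hbd (d₁ ⊔ c₁)).2
  have hdc2 := hadd d₂ c₂ hdc₂
  have hdc2' := (hbd (d₂ ⊔ c₂)).2
  have ec := sum3 c₃ u d₃ hcu hcd hud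
  have hc1 := (hbd (c₃ ⊔ u ⊔ d₃)).2
  have hu := hadd u uᶜ (le_of_eq (Ortholattice.compl_compl u).symm)
  rw [Ortholattice.sup_compl_self, htop] at hu
  have hu0 := (hbd u).1
  linarith
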